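/- Let B be a real Banach space with continuous dual B*, let 𝓛 : B → B* be a bounded linear bijection that is symmetric ([𝓛u, v] = [𝓛v, u]) and positive ([𝓛u, u] ≥ 0), and let G := 𝓛⁻¹. Define ‖u‖ := [𝓛u, u]^{1/2} and ‖φ‖_* := sup_{0 ≠ u ∈ B} [φ, u]/‖u‖. Let {φ_i}_{i∈I} ⊂ B* be linearly independent with I finite and written as a disjoint union I = I₁ ∪ I₂, and let Θ ∈ ℝ^{I×I} be the matrix Θ_{ij} := [φ_i, Gφ_j], with blocks Θ₁₁, Θ₁₂, Θ₂₁, Θ₂₂ relative to I₁, I₂. Then for every α ∈ ℝ^{I₂}, setting φ := Σ_{i∈I₂} α_i φ_i, one has min_{φ' ∈ span{φ_i : i ∈ I₁}} ‖φ − φ'‖_*² = αᵀ (Θ₂₂ − Θ₂₁ Θ₁₁⁻¹ Θ₁₂) α. -/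

import Mathlib

open Matrix

/-- The dual norm `‖φ‖_* = sup_{0 ≠ u} [φ, u] / ‖u‖`, where `‖u‖ = [𝓛u, u]^{1/2}`
is the energy norm induced by `𝓛`. -/
noncomputable def dualNorm {E : Type*} [NormedAddCommGroup E] [NormedSpace ℝ E]
    (L : E →L[ℝ] StrongDual ℝ E) (φ : StrongDual ℝ E) : ℝ :=
  ⨆ u : {u : E // u ≠ 0}, φ u.1 / Real.sqrt (L u.1 u.1)

section Aux

variable {E : Type*} [NormedAddCommGroup E] [NormedSpace ℝ E]
  (L : E →L[ℝ] StrongDual ℝ E)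

/-- Cauchy–Schwarz for the positive symmetric bilinear pairing induced by `L`. -/
lemma aux_cs (hLsymm : ∀ u v : E, L u v = L v u) (hLpos : ∀ u : E, 0 ≤ L u u)
    (u v : E) : (L u v) ^ 2 ≤ L u u * L v v := by
  have key : ∀ t : ℝ, 0 ≤ L v v * (t * t) + (2 * L u v) * t + L u u := by
    intro t
    have h := hLpos (u + t • v)
    have e : L (u + t • v) (u + t • v) = L v v * (t * t) + (2 * L u v) * t + L u u := by
      simp only [map_add, _root_.map_smul, ContinuousLinearMap.add_apply,
        ContinuousLinearMap.coe_smul', Pi.smul_apply, smul_eq_mul]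
      rw [hLsymm v u]; ring
    linarith [e ▸ h]
  have hd := discrim_le_zero key
  rw [discrim] at hd
  nlinarith

/-- Definiteness of the pairing: `[𝓛u,u] > 0` for `u ≠ 0`. -/
lemma aux_pos (hLsymm : ∀ u v : E, L u v = L v u) (hLpos : ∀ u : E, 0 ≤ L u u)
    (G : StrongDual ℝ E → E) (hGL : ∀ u : E, G (L u) = u)
    {u : E} (hu : u ≠ 0) : 0 < L u u := by
  rcases (hLpos u).lt_or_eq with h | h
  · exact h
  exfalso
  apply hu
  have hz : L u = 0 := by
    ext v
    have := aux_cs L hLsymm hLpos u v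
    have h2 : (L u v) ^ 2 ≤ 0 := by rw [← h, zero_mul] at this; exact this
    have : L u v = 0 := by nlinarith [sq_nonneg (L u v)]
    simpa using this
  calc u = G (L u) := (hGL u).symm
    _ = G (L 0) := by rw [hz, map_zero]
    _ = 0 := hGL 0

/-- The dual norm equals `[φ, Gφ]^{1/2}`. -/
lemma dualNorm_eq (hLsymm : ∀ u v : E, L u v = L v u) (hLpos : ∀ u : E, 0 ≤ L u u)
    (G : StrongDual ℝ E → E) (hGL : ∀ u : E, G (L u) = u)
    (hLG : ∀ ψ : StrongDual ℝ E, L (G ψ) = ψ)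
    (ψ : StrongDual ℝ E) :
    dualNorm L ψ = Real.sqrt (ψ (G ψ)) := by
  have hnn : 0 ≤ ψ (G ψ) := by
    have := hLpos (G ψ); rwa [hLG] at this
  have hub : ∀ u : {u : E // u ≠ 0},
      ψ u.1 / Real.sqrt (L u.1 u.1) ≤ Real.sqrt (ψ (G ψ)) := by
    rintro ⟨u, hu⟩
    have hpos : 0 < L u u := aux_pos L hLsymm hLpos G hGL hu
    rw [div_le_iff₀ (Real.sqrt_pos.2 hpos)]
    have h1 : ψ u ≤ Real.sqrt ((ψ u) ^ 2) := by
      rw [Real.sqrt_sq_eq_abs]; exact le_abs_self _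
    have h2 : (ψ u) ^ 2 ≤ (ψ (G ψ)) * L u u := by
      have hcs := aux_cs L hLsymm hLpos (G ψ) u
      rwa [hLG] at hcs
    calc ψ u ≤ Real.sqrt ((ψ u) ^ 2) := h1
      _ ≤ Real.sqrt ((ψ (G ψ)) * L u u) := Real.sqrt_le_sqrt h2
      _ = Real.sqrt (ψ (G ψ)) * Real.sqrt (L u u) := Real.sqrt_mul hnn _
  rcases isEmpty_or_nonempty {u : E // u ≠ 0} with he | hne
  · have hG0 : G ψ = 0 := by
      by_contra h
      exact he.false ⟨G ψ, h⟩
    rw [dualNorm, Real.iSup_of_isEmpty, hG0]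
    simp
  · have hbdd : BddAbove (Set.range fun u : {u : E // u ≠ 0} =>
        ψ u.1 / Real.sqrt (L u.1 u.1)) := ⟨Real.sqrt (ψ (G ψ)), by
      rintro x ⟨u, rfl⟩; exact hub u⟩
    refine le_antisymm (ciSup_le hub) ?_
    rcases eq_or_ne ψ 0 with rfl | hψ
    · obtain ⟨u⟩ := hne
      refine le_ciSup_of_le hbdd u ?_
      simp
    · have hGψ : G ψ ≠ 0 := by
        intro h
        apply hψ
        rw [← hLG ψ, h, map_zero]
      refine le_ciSup_of_le hbdd ⟨G ψ, hGψ⟩ ?_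
      have : L (G ψ) (G ψ) = ψ (G ψ) := by rw [hLG]
      rw [this, Real.div_sqrt]

/-- The squared dual norm equals `[φ, Gφ]`. -/
lemma dualNorm_sq (hLsymm : ∀ u v : E, L u v = L v u) (hLpos : ∀ u : E, 0 ≤ L u u)
    (G : StrongDual ℝ E → E) (hGL : ∀ u : E, G (L u) = u)
    (hLG : ∀ ψ : StrongDual ℝ E, L (G ψ) = ψ)
    (ψ : StrongDual ℝ E) : (dualNorm L ψ) ^ 2 = ψ (G ψ) := by
  have hnn : 0 ≤ ψ (G ψ) := by
    have := hLpos (G ψ); rwa [hLG] at this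
  rw [dualNorm_eq L hLsymm hLpos G hGL hLG, Real.sq_sqrt hnn]

/-- Expansion of the quadratic form of a linear combination as a Gram-matrix quadratic form. -/
lemma gram_quadratic (G : StrongDual ℝ E → E)
    (hGL : ∀ u : E, G (L u) = u) (hLG : ∀ ψ : StrongDual ℝ E, L (G ψ) = ψ)
    {ι : Type*} [Fintype ι] (v : ι → StrongDual ℝ E) (γ : ι → ℝ) :
    (∑ k, γ k • v k) (G (∑ k, γ k • v k))
      = γ ⬝ᵥ ((Matrix.of fun i j => v i (G (v j))) *ᵥ γ) := by
  have Gadd : ∀ ψ χ, G (ψ + χ) = G ψ + G χ := fun ψ χ => by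
    conv_lhs => rw [← hLG ψ, ← hLG χ, ← map_add L, hGL]
  have Gsmul : ∀ (c : ℝ) ψ, G (c • ψ) = c • G ψ := fun c ψ => by
    conv_lhs => rw [← hLG ψ, ← _root_.map_smul L, hGL]
  let G' : StrongDual ℝ E →ₗ[ℝ] E :=
    { toFun := G, map_add' := Gadd, map_smul' := Gsmul }
  have hG' : ∀ ψ, G ψ = G' ψ := fun _ => rfl
  rw [hG', map_sum]
  simp only [_root_.map_smul]
  rw [ContinuousLinearMap.sum_apply]
  simp only [ContinuousLinearMap.coe_smul', Pi.smul_apply, smul_eq_mul, map_sum,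
    _root_.map_smul, dotProduct, mulVec, Matrix.of_apply]
  refine Finset.sum_congr rfl fun i _ => ?_
  simp only [← hG']
  rw [Finset.mul_sum]
  exact Finset.sum_congr rfl fun j _ => by ring

/-- The Gram matrix of a linearly independent family is positive definite. -/
lemma gram_posDef (hLsymm : ∀ u v : E, L u v = L v u) (hLpos : ∀ u : E, 0 ≤ L u u)
    (G : StrongDual ℝ E → E)
    (hGL : ∀ u : E, G (L u) = u) (hLG : ∀ ψ : StrongDual ℝ E, L (G ψ) = ψ)
    {ι : Type*} [Fintype ι] (v : ι → StrongDual ℝ E)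
    (hv : LinearIndependent ℝ v) :
    (Matrix.of fun i j => v i (G (v j))).PosDef := by
  refine Matrix.PosDef.of_dotProduct_mulVec_pos ?_ ?_
  · ext i j
    simp only [conjTranspose_apply, Matrix.of_apply, star_trivial]
    conv_lhs => rw [← hLG (v j)]
    rw [hLsymm, hLG]
  · intro x hx
    rw [star_trivial, ← gram_quadratic L G hGL hLG v x]
    set w := ∑ k, x k • v k with hw
    have hwne : w ≠ 0 := by
      intro h
      apply hx
      funext i
      exact (Fintype.linearIndependent_iff.1 hv) x h i
    have hGw : G w ≠ 0 := by
      intro h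
      apply hwne
      rw [← hLG w, h, map_zero]
    have := aux_pos L hLsymm hLpos G hGL hGw
    rwa [hLG] at this

end Aux

/-- For `φ = Σ_{i∈I₂} α_i φ_i`, the squared dual-norm distance of `φ`
to `span{φ_i : i ∈ I₁}` is attained and equals `αᵀ (Θ₂₂ − Θ₂₁ Θ₁₁⁻¹ Θ₁₂) α`. -/
theorem dual_distance_eq_schur_quadratic_form
    {E : Type*} [NormedAddCommGroup E] [NormedSpace ℝ E] [CompleteSpace E]
    (L : E →L[ℝ] StrongDual ℝ E)
    (hLbij : Function.Bijective L)
    (hLsymm : ∀ u v : E, L u v = L v u) (hLpos : ∀ u : E, 0 ≤ L u u)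
    (G : StrongDual ℝ E → E)
    (hGL : ∀ u : E, G (L u) = u) (hLG : ∀ ψ : StrongDual ℝ E, L (G ψ) = ψ)
    {I₁ I₂ : Type*} [Fintype I₁] [Fintype I₂] [DecidableEq I₁]
    (φ : I₁ ⊕ I₂ → StrongDual ℝ E) (hφ : LinearIndependent ℝ φ)
    (Θ : Matrix (I₁ ⊕ I₂) (I₁ ⊕ I₂) ℝ) (hΘ : ∀ i j, Θ i j = (φ i) (G (φ j)))
    (α : I₂ → ℝ) :
    IsLeast
      {x : ℝ | ∃ φ' ∈ Submodule.span ℝ (Set.range fun i : I₁ => φ (Sum.inl i)),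
        x = (dualNorm L ((∑ i : I₂, α i • φ (Sum.inr i)) - φ')) ^ 2}
      (α ⬝ᵥ ((Θ.toBlocks₂₂ - Θ.toBlocks₂₁ * Θ.toBlocks₁₁⁻¹ * Θ.toBlocks₁₂) *ᵥ α)) := by
  classical
  have hsymB : ∀ ψ χ : StrongDual ℝ E, ψ (G χ) = χ (G ψ) := fun ψ χ => by
    conv_lhs => rw [← hLG ψ]
    rw [hLsymm, hLG]
  have hΘeq : Θ = Matrix.of fun i j => φ i (G (φ j)) := by
    ext i j; exact hΘ i j
  set A := Θ.toBlocks₁₁ with hA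
  set Bm := Θ.toBlocks₁₂ with hBm
  set D := Θ.toBlocks₂₂ with hD
  have hApd : A.PosDef := by
    have hAe : A = Matrix.of fun i j => (φ ∘ Sum.inl) i (G ((φ ∘ Sum.inl) j)) := by
      ext i j; exact hΘ (Sum.inl i) (Sum.inl j)
    rw [hAe]
    exact gram_posDef L hLsymm hLpos G hGL hLG _ (hφ.comp Sum.inl Sum.inl_injective)
  haveI : Invertible A := hApd.isUnit.invertible
  have h21 : Θ.toBlocks₂₁ = Bmᴴ := by
    ext i j
    simp only [toBlocks₂₁, toBlocks₁₂, conjTranspose_apply, Matrix.of_apply, star_trivial, hBm]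
    rw [hΘ, hΘ, hsymB]
  have hfb : Θ = fromBlocks A Bm Bmᴴ D := by
    rw [← h21, hA, hBm, hD]; exact (fromBlocks_toBlocks Θ).symm
  -- quadratic form of a sum
  have quad : ∀ β : I₁ → ℝ,
      (dualNorm L ((∑ i : I₂, α i • φ (Sum.inr i)) - ∑ i : I₁, β i • φ (Sum.inl i))) ^ 2
        = ((-β) ⊕ᵥ α) ⬝ᵥ (Θ *ᵥ ((-β) ⊕ᵥ α)) := by
    intro β
    have hsum : (∑ i : I₂, α i • φ (Sum.inr i)) - (∑ i : I₁, β i • φ (Sum.inl i))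
        = ∑ k : I₁ ⊕ I₂, ((-β) ⊕ᵥ α) k • φ k := by
      rw [Fintype.sum_sum_type]
      simp only [Sum.elim_inl, Sum.elim_inr, Pi.neg_apply, neg_smul, Finset.sum_neg_distrib]
      rw [sub_eq_add_neg, add_comm]
      congr 1
      rw [← Finset.sum_neg_distrib]
      exact Finset.sum_congr rfl fun i _ => (neg_smul _ _).symm
    rw [hsum, dualNorm_sq L hLsymm hLpos G hGL hLG,
      gram_quadratic L G hGL hLG, ← hΘeq]
  -- Schur decomposition of the quadratic form
  have schur : ∀ x : I₁ → ℝ,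
      (x ⊕ᵥ α) ⬝ᵥ (Θ *ᵥ (x ⊕ᵥ α))
        = (x + (A⁻¹ * Bm) *ᵥ α) ⬝ᵥ (A *ᵥ (x + (A⁻¹ * Bm) *ᵥ α))
          + α ⬝ᵥ ((D - Bmᴴ * A⁻¹ * Bm) *ᵥ α) := by
    intro x
    have hsc := Matrix.schur_complement_eq₁₁ Bm D x α hApd.isHermitian
    simp only [star_trivial] at hsc
    rw [hfb, dotProduct_mulVec, dotProduct_mulVec, dotProduct_mulVec, hsc]
  have hgoalval : α ⬝ᵥ ((Θ.toBlocks₂₂ - Θ.toBlocks₂₁ * Θ.toBlocks₁₁⁻¹ * Θ.toBlocks₁₂) *ᵥ α)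
      = α ⬝ᵥ ((D - Bmᴴ * A⁻¹ * Bm) *ᵥ α) := by
    rw [h21]
  rw [hgoalval]
  constructor
  · -- the minimum is attained at `φ' = Σ ((Θ₁₁⁻¹ Θ₁₂) α)_i • φ_i`
    refine ⟨∑ i : I₁, ((A⁻¹ * Bm) *ᵥ α) i • φ (Sum.inl i), ?_, ?_⟩
    · exact Submodule.sum_mem _ fun i _ => Submodule.smul_mem _ _
        (Submodule.subset_span ⟨i, rfl⟩)
    · rw [quad, schur]
      simp
  · -- lower bound
    rintro x ⟨φ', hφ'span, rfl⟩
    obtain ⟨β, rfl⟩ := (Submodule.mem_span_range_iff_exists_fun ℝ).1 hφ'span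
    rw [quad, schur]
    have hpsd := hApd.posSemidef.dotProduct_mulVec_nonneg (-β + (A⁻¹ * Bm) *ᵥ α)
    rw [star_trivial] at hpsd
    linarith
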